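/- Let l, r ≥ 0 be integers with l + r > 0 and a_k, λ₀ as in the context. If l = r + 1, then for every real θ, Re λ₀(e^{iθ}) = -(2^{2(r+1)} · (r+1)! · r! / (2r+2)!) · (sin(θ/2))^{2(r+1)}. If l = r + 2, then for every real θ, Re λ₀(e^{iθ}) = -(2^{2(r+2)} · (2r+3) · (r+2)! · r! / (2r+4)!) · (sin(θ/2))^{2(r+2)}. Consequently, if r + 1 ≤ l ≤ r + 2, then Re λ₀(e^{iθ}) < 0 for all 0 < θ < 2π, and λ₀(1) = 0. -/

import Mathlib

open Finset

/-- Optimal finite-difference coefficients for the first derivative on the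
stencil `{-l, …, r}`. -/
noncomputable def aCoef (l r : ℕ) (k : ℤ) : ℝ :=
  if k = 0 then
    -∑ ν ∈ (Finset.Icc (-(l : ℤ)) (r : ℤ)).erase 0, (1 : ℝ) / (ν : ℝ)
  else
    -((-1 : ℝ) ^ k / (k : ℝ)) *
      ((Nat.factorial l * Nat.factorial r : ℕ) : ℝ) /
      ((Nat.factorial ((l : ℤ) + k).toNat * Nat.factorial ((r : ℤ) - k).toNat : ℕ) : ℝ)

/-- The symbol `λ₀(s) = -Σ_{k=-l}^{r} a_k s^k` of the advection discretization. -/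
noncomputable def lam0 (l r : ℕ) (s : ℂ) : ℂ :=
  -∑ k ∈ Finset.Icc (-(l : ℤ)) (r : ℤ), (aCoef l r k : ℂ) * s ^ k

noncomputable def Hsum (m : ℕ) : ℝ := ∑ i ∈ Icc 1 m, (1 : ℝ) / i

noncomputable def Asum (l r : ℕ) : ℝ :=
  ∑ k ∈ Icc 1 r, (-1 : ℝ) ^ (k + 1) * ((l + r).choose (l + k)) / k

lemma Icc_one_succ (m : ℕ) : Icc 1 (m + 1) = insert (m + 1) (Icc 1 m) := by
  ext x; simp [Finset.mem_Icc, Finset.mem_insert]; omega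

lemma Hsum_succ (m : ℕ) : Hsum (m + 1) = Hsum m + 1 / (m + 1) := by
  unfold Hsum
  rw [Icc_one_succ, Finset.sum_insert (by simp)]
  push_cast; ring

lemma alt_sum (n : ℕ) :
    ∑ k ∈ Icc 1 n, (-1:ℝ)^(k+1) * ((n+1).choose k) = 1 + (-1)^(n+1) := by
  have h0 : ∑ m ∈ range (n + 2), (-1:ℝ) ^ m * ((n+1).choose m) = 0 := by
    have := Int.alternating_sum_range_choose (n := n + 1)
    rw [if_neg (by omega)] at this
    exact_mod_cast congrArg (Int.cast : ℤ → ℝ) this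
  have hr : range (n + 2) = insert 0 (insert (n+1) (Icc 1 n)) := by
    ext x; simp [Finset.mem_range, Finset.mem_Icc]; omega
  rw [hr, Finset.sum_insert (by simp), Finset.sum_insert (by simp)] at h0
  simp only [pow_zero, Nat.choose_zero_right, Nat.choose_self, Nat.cast_one, one_mul,
    mul_one] at h0
  have : ∑ k ∈ Icc 1 n, (-1:ℝ)^(k+1) * ((n+1).choose k)
      = -∑ k ∈ Icc 1 n, (-1:ℝ)^k * ((n+1).choose k) := by
    rw [← Finset.sum_neg_distrib]
    exact Finset.sum_congr rfl fun k _ => by ring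
  rw [this]; linarith

lemma Asum_zero_left (r : ℕ) : Asum 0 r = Hsum r := by
  induction r with
  | zero => simp [Asum, Hsum]
  | succ n ih =>
    unfold Asum at ih ⊢
    rw [Icc_one_succ, Finset.sum_insert (by simp)]
    have split : ∀ k ∈ Icc 1 n, (-1:ℝ)^(k+1) * ((0 + (n+1)).choose (0 + k)) / k
        = (-1:ℝ)^(k+1) * ((0 + n).choose (0 + k)) / k
          + (1/(n+1)) * ((-1:ℝ)^(k+1) * ((n+1).choose k)) := by
      intro k hk
      simp only [Finset.mem_Icc] at hk
      obtain ⟨m, rfl⟩ : ∃ m, k = m + 1 := ⟨k-1, by omega⟩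
      have hpasN : (n+1).choose (m+1) = n.choose (m+1) + n.choose m := by
        simp only [Nat.choose_succ_succ, Nat.succ_eq_add_one]; omega
      have hpas : ((0 + (n+1)).choose (0 + (m+1)) : ℝ)
          = ((0+n).choose (0+(m+1)) : ℝ) + (n.choose m : ℝ) := by
        simp only [Nat.zero_add, hpasN]
        push_cast; ring
      have h2 : ((n:ℝ)+1) * n.choose m = (n+1).choose (m+1) * (m+1) := by
        have := Nat.add_one_mul_choose_eq n m
        exact_mod_cast this
      have hk0 : ((m:ℝ)+1) ≠ 0 := by positivity
      have hn0 : (n:ℝ)+1 ≠ 0 := by positivity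
      have h3 : (n.choose m : ℝ) / (m+1) = ((n+1).choose (m+1) : ℝ) / (n+1) := by
        field_simp; linarith
      rw [hpas, mul_add, add_div]
      push_cast
      congr 1
      rw [mul_div_assoc, h3]; ring
    rw [Finset.sum_congr rfl split, Finset.sum_add_distrib, ih, ← Finset.mul_sum, alt_sum,
      Hsum_succ]
    simp only [show (0 + (n+1)) = n+1 from by ring, show (0 + (n+1)) = n+1 from by ring,
      Nat.choose_self, Nat.cast_one]
    rw [show n + 1 + 1 = n + 2 by ring]
    have h4 : (-1:ℝ)^(n+2) = (-1)^n := by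
      rw [pow_add]; simp
    rw [h4]
    have hn0 : (n:ℝ)+1 ≠ 0 := by positivity
    field_simp
    push_cast; ring

lemma Asum_pascal (l r : ℕ) : Asum (l+1) (r+1) = Asum l (r+1) + Asum (l+1) r := by
  unfold Asum
  have split : ∀ k ∈ Icc 1 (r+1), (-1:ℝ)^(k+1) * ((l+1+(r+1)).choose (l+1+k)) / k
      = (-1:ℝ)^(k+1) * ((l+(r+1)).choose (l+k)) / k
        + (-1:ℝ)^(k+1) * ((l+1+r).choose (l+1+k)) / k := by
    intro k hk
    have h : (l+1+(r+1)).choose (l+1+k) = (l+(r+1)).choose (l+k) + (l+1+r).choose (l+1+k) := by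
      have h := Nat.choose_succ_succ (l+r+1) (l+k)
      simp only [Nat.succ_eq_add_one] at h
      rw [show l+1+(r+1) = l+r+1+1 by ring, show l+1+k = l+k+1 by ring, h,
        show l+(r+1) = l+r+1 by ring]
      congr 2
      omega
    rw [h]; push_cast; ring
  rw [Finset.sum_congr rfl split, Finset.sum_add_distrib]
  congr 1
  rw [Icc_one_succ, Finset.sum_insert (by simp)]
  have hz : ((l+1+r).choose (l+1+(r+1)) : ℝ) = 0 := by
    rw [Nat.choose_eq_zero_of_lt (by omega)]; simp
  rw [hz]; simp

lemma Asum_sub (l r : ℕ) :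
    Asum l r - Asum r l = ((l+r).choose l : ℝ) * (Hsum r - Hsum l) := by
  induction l generalizing r with
  | zero =>
    rw [Asum_zero_left]
    simp [Asum, Hsum]
  | succ l ihl =>
    induction r with
    | zero =>
      rw [Asum_zero_left]
      simp [Asum, Hsum]
    | succ r ihr =>
      rw [Asum_pascal l r, Asum_pascal r l]
      have e1 := ihl (r+1)
      have e2 := ihr
      have hkey : ((l+r+1).choose (l+1) : ℝ) * (l+1) = ((l+r+1).choose l : ℝ) * (r+1) := by
        have := Nat.choose_succ_right_eq (l+r+1) l
        have h2 : l + r + 1 - l = r + 1 := by omega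
        rw [h2] at this
        exact_mod_cast this
      have hc : (((l+1)+(r+1)).choose (l+1) : ℝ)
          = ((l+(r+1)).choose l : ℝ) + (((l+1)+r).choose (l+1) : ℝ) := by
        have h := Nat.choose_succ_succ (l+r+1) l
        simp only [Nat.succ_eq_add_one] at h
        rw [show (l+1)+(r+1) = l+r+1+1 by ring, h]
        push_cast
        rw [show l+(r+1) = l+r+1 by ring, show (l+1)+r = l+r+1 by ring]
      rw [hc, Hsum_succ r, Hsum_succ l]
      rw [Hsum_succ r] at e1
      rw [Hsum_succ l] at e2
      have hl1 : ((l:ℝ)+1) ≠ 0 := by positivity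
      have hr1 : ((r:ℝ)+1) ≠ 0 := by positivity
      rw [show l+(r+1) = l+r+1 by ring] at e1 ⊢
      rw [show (l+1)+r = l+r+1 by ring] at e2 ⊢
      push_cast at e1 e2 hkey ⊢
      have hkey' : ((l+r+1).choose (l+1) : ℝ)/((r:ℝ)+1) = ((l+r+1).choose l : ℝ)/((l:ℝ)+1) := by
        rw [div_eq_div_iff hr1 hl1]
        linear_combination hkey
      linear_combination e1 + e2 - hkey'

lemma fact_cast_ne (a b : ℕ) : ((Nat.factorial a * Nat.factorial b : ℕ) : ℝ) ≠ 0 :=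
  Nat.cast_ne_zero.mpr (Nat.mul_ne_zero (Nat.factorial_ne_zero a) (Nat.factorial_ne_zero b))

lemma fact_ratio (l r : ℕ) (k : ℤ) (h1 : -(l:ℤ) ≤ k) (h2 : k ≤ (r:ℤ)) :
    ((Nat.factorial l * Nat.factorial r : ℕ) : ℝ) /
      ((Nat.factorial ((l : ℤ) + k).toNat * Nat.factorial ((r : ℤ) - k).toNat : ℕ) : ℝ)
    = ((l+r).choose ((l:ℤ)+k).toNat : ℝ) * ((Nat.factorial l * Nat.factorial r : ℕ) : ℝ)
        / ((Nat.factorial (l+r) : ℕ) : ℝ) := by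
  set m := ((l:ℤ)+k).toNat with hm
  have hmle : m ≤ l + r := by omega
  have hrk : ((r:ℤ) - k).toNat = l + r - m := by omega
  have key : (l+r).choose m * (m.factorial * (l+r-m).factorial) = (l+r).factorial := by
    rw [← Nat.choose_mul_factorial_mul_factorial hmle]; ring
  rw [hrk]
  have d1 := fact_cast_ne m (l+r-m)
  have d2 : ((Nat.factorial (l+r) : ℕ) : ℝ) ≠ 0 :=
    Nat.cast_ne_zero.mpr (Nat.factorial_ne_zero _)
  rw [div_eq_div_iff d1 d2]
  have : (Nat.factorial l * Nat.factorial r) * Nat.factorial (l+r)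
      = (l+r).choose m * (Nat.factorial l * Nat.factorial r)
          * (Nat.factorial m * Nat.factorial (l+r-m)) := by
    rw [← key]; ring
  exact_mod_cast this

lemma NB (l r : ℕ) :
    ((Nat.factorial l * Nat.factorial r : ℕ) : ℝ) / ((Nat.factorial (l+r) : ℕ) : ℝ)
      = 1 / ((l+r).choose l : ℝ) := by
  have hB : ((l+r).choose l : ℝ) ≠ 0 :=
    Nat.cast_ne_zero.mpr (Nat.choose_pos (Nat.le_add_right l r)).ne'
  have d2 : ((Nat.factorial (l+r) : ℕ) : ℝ) ≠ 0 :=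
    Nat.cast_ne_zero.mpr (Nat.factorial_ne_zero _)
  rw [div_eq_div_iff d2 hB]
  have := Nat.choose_mul_factorial_mul_factorial (Nat.le_add_right l r)
  rw [show l + r - l = r by omega] at this
  have : (Nat.factorial l * Nat.factorial r) * (l+r).choose l = Nat.factorial (l+r) := by
    rw [← this]; ring
  rw [one_mul]
  exact_mod_cast this

lemma aCoef_pos (l r : ℕ) (m : ℕ) (h1 : 1 ≤ m) (h2 : m ≤ r) :
    aCoef l r (m:ℤ) = ((-1:ℝ)^(m+1) * ((l+r).choose (l+m)) / m) / ((l+r).choose l) := by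
  rw [aCoef, if_neg (by exact_mod_cast (by omega : ¬ (m:ℤ) = 0)), mul_div_assoc,
    fact_ratio l r m (by omega) (by omega)]
  rw [show ((l:ℤ)+(m:ℤ)).toNat = l + m by omega]
  rw [mul_div_assoc (((l+r).choose (l+m) : ℝ)), NB]
  rw [show ((m:ℕ):ℤ) = (m:ℤ) from rfl, zpow_natCast]
  have hm : (m:ℝ) ≠ 0 := by positivity
  have hB : ((l+r).choose l : ℝ) ≠ 0 :=
    Nat.cast_ne_zero.mpr (Nat.choose_pos (Nat.le_add_right l r)).ne'
  push_cast
  field_simp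
  ring

lemma aCoef_neg (l r : ℕ) (m : ℕ) (h1 : 1 ≤ m) (h2 : m ≤ l) :
    aCoef l r (-(m:ℤ)) = -(((-1:ℝ)^(m+1) * ((r+l).choose (r+m)) / m) / ((l+r).choose l)) := by
  rw [aCoef, if_neg (by omega : ¬ (-(m:ℤ)) = 0), mul_div_assoc,
    fact_ratio l r (-(m:ℤ)) (by omega) (by omega)]
  rw [show ((l:ℤ)+(-(m:ℤ))).toNat = l - m by omega]
  have hsymm : (l+r).choose (l-m) = (r+l).choose (r+m) := by
    have h := Nat.choose_symm (n := l + r) (k := r + m) (by omega)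
    rw [show l + r - (r+m) = l - m by omega] at h
    rw [h, Nat.add_comm l r]
  rw [hsymm, mul_div_assoc (((r+l).choose (r+m) : ℝ)), NB]
  have hpow : (-1:ℝ) ^ (-(m:ℤ)) = (-1:ℝ)^(m:ℕ) := by
    rw [zpow_neg, zpow_natCast]
    rcases Nat.even_or_odd m with he | ho
    · rw [he.neg_one_pow, inv_one]
    · rw [ho.neg_one_pow]; norm_num
  rw [hpow]
  have hm : (m:ℝ) ≠ 0 := by positivity
  have hB : ((l+r).choose l : ℝ) ≠ 0 :=
    Nat.cast_ne_zero.mpr (Nat.choose_pos (Nat.le_add_right l r)).ne'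
  push_cast
  field_simp
  ring

lemma sum_over_erase (l r : ℕ) (f : ℤ → ℝ) :
    ∑ k ∈ (Icc (-(l:ℤ)) (r:ℤ)).erase 0, f k
    = ∑ k ∈ Icc (-(l:ℤ)) (-1), f k + ∑ k ∈ Icc (1:ℤ) (r:ℤ), f k := by
  rw [← Finset.sum_union (by
    rw [Finset.disjoint_left]; intro a ha hb
    simp only [Finset.mem_Icc] at ha hb; omega)]
  apply Finset.sum_congr _ (fun _ _ => rfl)
  ext x
  simp only [Finset.mem_erase, Finset.mem_Icc, Finset.mem_union]
  omega

lemma sum_pos_reindex (r : ℕ) (g : ℤ → ℝ) :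
    ∑ k ∈ Icc (1:ℤ) (r:ℤ), g k = ∑ m ∈ Icc 1 r, g (m:ℤ) := by
  refine Finset.sum_nbij' (fun k => k.toNat) (fun m => (m:ℤ)) ?_ ?_ ?_ ?_ ?_
  · intro a ha; simp only [Finset.mem_Icc] at *; omega
  · intro a ha; simp only [Finset.mem_Icc] at *; omega
  · intro a ha; simp only [Finset.mem_Icc] at ha; omega
  · intro a ha; simp only [Finset.mem_Icc] at ha; omega
  · intro a ha; simp only [Finset.mem_Icc] at ha
    congr 1; omega

lemma sum_neg_reindex (l : ℕ) (g : ℤ → ℝ) :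
    ∑ k ∈ Icc (-(l:ℤ)) (-1:ℤ), g k = ∑ m ∈ Icc 1 l, g (-(m:ℤ)) := by
  refine Finset.sum_nbij' (fun k => (-k).toNat) (fun m => -(m:ℤ)) ?_ ?_ ?_ ?_ ?_
  · intro a ha; simp only [Finset.mem_Icc] at *; omega
  · intro a ha; simp only [Finset.mem_Icc] at *; omega
  · intro a ha; simp only [Finset.mem_Icc] at ha; omega
  · intro a ha; simp only [Finset.mem_Icc] at ha; omega
  · intro a ha; simp only [Finset.mem_Icc] at ha
    congr 1; omega

lemma Hsplit (l r : ℕ) :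
    ∑ ν ∈ (Icc (-(l:ℤ)) (r:ℤ)).erase 0, (1:ℝ)/(ν:ℝ) = Hsum r - Hsum l := by
  rw [sum_over_erase l r (fun ν => (1:ℝ)/(ν:ℝ)), sum_pos_reindex, sum_neg_reindex]
  unfold Hsum
  have h1 : ∑ m ∈ Icc 1 l, (1:ℝ)/((-(m:ℤ) : ℤ):ℝ) = -∑ m ∈ Icc 1 l, (1:ℝ)/(m:ℝ) := by
    rw [← Finset.sum_neg_distrib]
    apply Finset.sum_congr rfl
    intro m _; push_cast; ring
  have h2 : ∑ m ∈ Icc 1 r, (1:ℝ)/(((m:ℤ)):ℝ) = ∑ m ∈ Icc 1 r, (1:ℝ)/(m:ℝ) := by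
    apply Finset.sum_congr rfl
    intro m _; push_cast; ring
  rw [h1, h2]; ring

lemma sum_aCoef (l r : ℕ) : ∑ k ∈ Icc (-(l:ℤ)) (r:ℤ), aCoef l r k = 0 := by
  have h0 : (0:ℤ) ∈ Icc (-(l:ℤ)) (r:ℤ) := by
    simp only [Finset.mem_Icc]; omega
  rw [← Finset.add_sum_erase _ _ h0]
  have ha0 : aCoef l r 0 = -(Hsum r - Hsum l) := by
    rw [aCoef, if_pos rfl, Hsplit]
  have hB : ((l+r).choose l : ℝ) ≠ 0 :=
    Nat.cast_ne_zero.mpr (Nat.choose_pos (Nat.le_add_right l r)).ne'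
  have hrest : ∑ k ∈ (Icc (-(l:ℤ)) (r:ℤ)).erase 0, aCoef l r k = Hsum r - Hsum l := by
    rw [sum_over_erase l r (aCoef l r), sum_pos_reindex, sum_neg_reindex]
    have hpos : ∑ m ∈ Icc 1 r, aCoef l r (m:ℤ)
        = (∑ m ∈ Icc 1 r, (-1:ℝ)^(m+1) * ((l+r).choose (l+m)) / m) / ((l+r).choose l) := by
      rw [Finset.sum_div]
      apply Finset.sum_congr rfl
      intro m hm; simp only [Finset.mem_Icc] at hm
      exact aCoef_pos l r m hm.1 hm.2
    have hneg : ∑ m ∈ Icc 1 l, aCoef l r (-(m:ℤ))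
        = -((∑ m ∈ Icc 1 l, (-1:ℝ)^(m+1) * ((r+l).choose (r+m)) / m) / ((l+r).choose l)) := by
      rw [Finset.sum_div, ← Finset.sum_neg_distrib]
      apply Finset.sum_congr rfl
      intro m hm; simp only [Finset.mem_Icc] at hm
      exact aCoef_neg l r m hm.1 hm.2
    rw [hpos, hneg]
    have heq := Asum_sub l r
    unfold Asum at heq
    rw [neg_add_eq_sub, div_sub_div_same, heq]
    exact mul_div_cancel_left₀ _ hB
  rw [ha0, hrest]; ring

lemma binom_zpow_sum (l r : ℕ) (w : ℂ) (hw : w ≠ 0) :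
    ∑ k ∈ Icc (-(l:ℤ)) (r:ℤ), (((l+r).choose ((l:ℤ)+k).toNat : ℕ) : ℂ) * w ^ k
      = w ^ (-(l:ℤ)) * (1 + w) ^ (l+r) := by
  have key : ∑ k ∈ Icc (-(l:ℤ)) (r:ℤ), (((l+r).choose ((l:ℤ)+k).toNat : ℕ) : ℂ) * w ^ (k + (l:ℤ))
      = (1 + w) ^ (l+r) := by
    rw [show ((1:ℂ)+w) = (w+1) by ring, add_pow]
    refine Finset.sum_nbij' (fun k => ((l:ℤ)+k).toNat) (fun m => (m:ℤ) - l) ?_ ?_ ?_ ?_ ?_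
    · intro a ha; simp only [Finset.mem_Icc, Finset.mem_range] at *; omega
    · intro a ha; simp only [Finset.mem_Icc, Finset.mem_range] at *; omega
    · intro a ha; simp only [Finset.mem_Icc] at ha; omega
    · intro a ha; simp only [Finset.mem_range] at ha; omega
    · intro a ha; simp only [Finset.mem_Icc] at ha
      rw [show a + (l:ℤ) = ((((l:ℤ)+a).toNat : ℕ) : ℤ) by omega, zpow_natCast, one_pow]
      ring
  rw [← key, Finset.mul_sum]
  apply Finset.sum_congr rfl
  intro k hk
  have hwl : w ^ ((l:ℕ):ℤ) ≠ 0 := zpow_ne_zero _ hw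
  rw [zpow_add₀ hw, zpow_neg]
  field_simp

lemma one_sub_exp (θ : ℝ) :
    (1 : ℂ) - Complex.exp (θ * Complex.I)
      = ((2 * Real.sin (θ/2) : ℝ) : ℂ) * (-Complex.I) * Complex.exp (((θ/2 : ℝ) : ℂ) * Complex.I) := by
  have h : (θ : ℂ) = 2 * ((θ/2 : ℝ) : ℂ) := by push_cast; ring
  rw [h, show (2 : ℂ) * ((θ/2:ℝ):ℂ) * Complex.I = ((θ/2:ℝ):ℂ)*Complex.I + ((θ/2:ℝ):ℂ)*Complex.I by ring,
    Complex.exp_add]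
  rw [Complex.exp_mul_I]
  have hs : Complex.sin ((θ/2:ℝ):ℂ) = ((Real.sin (θ/2) : ℝ) : ℂ) := (Complex.ofReal_sin _).symm
  have hc : Complex.cos ((θ/2:ℝ):ℂ) = ((Real.cos (θ/2) : ℝ) : ℂ) := (Complex.ofReal_cos _).symm
  have hpyth : ((Real.sin (θ/2) : ℝ) : ℂ)^2 + ((Real.cos (θ/2) : ℝ) : ℂ)^2 = 1 := by
    have := Real.sin_sq_add_cos_sq (θ/2)
    rw [← Complex.ofReal_pow, ← Complex.ofReal_pow, ← Complex.ofReal_add, this, Complex.ofReal_one]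
  rw [hs, hc, Complex.ofReal_mul, Complex.ofReal_ofNat]
  linear_combination ((Real.sin (θ/2) : ℝ):ℂ)^2 * Complex.I_sq - hpyth

lemma exp_pow_form (m : ℕ) (x : ℝ) :
    Complex.exp ((x : ℂ) * Complex.I) ^ m = Complex.exp (((m * x : ℝ) : ℂ) * Complex.I) := by
  rw [← Complex.exp_nat_mul]
  push_cast
  ring_nf

lemma exp_mul_exp (a b : ℝ) :
    Complex.exp ((a:ℂ) * Complex.I) * Complex.exp ((b:ℂ) * Complex.I)
      = Complex.exp (((a+b : ℝ):ℂ) * Complex.I) := by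
  rw [← Complex.exp_add]; push_cast; ring_nf

lemma Epow (m : ℕ) (θ : ℝ) :
    ((1:ℂ) - Complex.exp ((θ:ℂ) * Complex.I)) ^ m
      = ((2*Real.sin (θ/2) : ℝ):ℂ)^m * (-Complex.I)^m
          * Complex.exp ((((m : ℝ)*(θ/2) : ℝ):ℂ) * Complex.I) := by
  rw [one_sub_exp, mul_pow, mul_pow, exp_pow_form]

lemma Im_case1 (r : ℕ) (θ : ℝ) :
    (((-1:ℝ)^(r+1) : ℂ) * Complex.exp (((-(((r+1:ℕ) : ℝ) * θ) : ℝ):ℂ) * Complex.I)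
        * ((1:ℂ) - Complex.exp ((θ:ℂ) * Complex.I))^(2*r+1)).im
      = 2^(2*r+1) * Real.sin (θ/2)^(2*r+1) * Real.cos (θ/2) := by
  have hexp : Complex.exp (((-(((r+1:ℕ) : ℝ) * θ) : ℝ):ℂ) * Complex.I)
      * Complex.exp (((((2*r+1 : ℕ) : ℝ)*(θ/2) : ℝ):ℂ) * Complex.I)
      = Complex.exp (((-(θ/2) : ℝ):ℂ) * Complex.I) := by
    rw [exp_mul_exp]
    congr 2
    push_cast; ring
  have hI : (-Complex.I)^(2*r+1) = (-1:ℂ)^r * (-Complex.I) := by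
    rw [pow_succ, pow_mul, show (-Complex.I)^2 = -1 by
      rw [neg_pow, Complex.I_sq]; norm_num]
  have key : ((-1:ℝ)^(r+1) : ℂ) * Complex.exp (((-(((r+1:ℕ) : ℝ) * θ) : ℝ):ℂ) * Complex.I)
        * ((1:ℂ) - Complex.exp ((θ:ℂ) * Complex.I))^(2*r+1)
      = (((2*Real.sin (θ/2))^(2*r+1) : ℝ):ℂ)
          * (Complex.I * Complex.exp (((-(θ/2) : ℝ):ℂ) * Complex.I)) := by
    rw [Epow, hI, ← hexp, Complex.ofReal_pow,
      show ((-1:ℝ)^(r+1) : ℂ) = (-1:ℂ)^(r+1) by push_cast; rfl]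
    have hsign : ((-1:ℂ))^(r+1) * (-1:ℂ)^r = (-1:ℂ)^(2*r+1) := by
      rw [← pow_add]; congr 1; ring
    have hodd : ((-1:ℂ))^(2*r+1) = -1 := Odd.neg_one_pow ⟨r, by ring⟩
    linear_combination (-(((2*Real.sin (θ/2) : ℝ):ℂ))^(2*r+1)
      * Complex.exp (((-(((r+1:ℕ) : ℝ) * θ) : ℝ):ℂ) * Complex.I)
      * Complex.exp (((((2*r+1 : ℕ) : ℝ)*(θ/2) : ℝ):ℂ) * Complex.I)
      * Complex.I) * (hsign.trans hodd)
  rw [key]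
  simp only [Complex.mul_im, Complex.mul_re, Complex.ofReal_re, Complex.ofReal_im,
    Complex.I_re, Complex.I_im, Complex.exp_ofReal_mul_I_re, Complex.exp_ofReal_mul_I_im,
    Real.cos_neg, Real.sin_neg, mul_pow]
  ring

lemma Im_case2 (r : ℕ) (θ : ℝ) :
    (((-1:ℝ)^(r+2) : ℂ) * Complex.exp (((-(((r+2:ℕ) : ℝ) * θ) : ℝ):ℂ) * Complex.I)
        * ((1:ℂ) - Complex.exp ((θ:ℂ) * Complex.I))^(2*r+2)).im
      = 2^(2*r+2) * Real.sin (θ/2)^(2*r+2) * Real.sin θ := by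
  have hexp : Complex.exp (((-(((r+2:ℕ) : ℝ) * θ) : ℝ):ℂ) * Complex.I)
      * Complex.exp (((((2*r+2 : ℕ) : ℝ)*(θ/2) : ℝ):ℂ) * Complex.I)
      = Complex.exp (((-θ : ℝ):ℂ) * Complex.I) := by
    rw [exp_mul_exp]
    congr 2
    push_cast; ring
  have hI2 : (-Complex.I)^(2*r+2) = (-1:ℂ)^(r+1) := by
    rw [show 2*r+2 = 2*(r+1) by ring, pow_mul, show (-Complex.I)^2 = -1 by
      rw [neg_pow, Complex.I_sq]; norm_num]
  have key : ((-1:ℝ)^(r+2) : ℂ) * Complex.exp (((-(((r+2:ℕ) : ℝ) * θ) : ℝ):ℂ) * Complex.I)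
        * ((1:ℂ) - Complex.exp ((θ:ℂ) * Complex.I))^(2*r+2)
      = -((((2*Real.sin (θ/2))^(2*r+2) : ℝ):ℂ)
          * Complex.exp (((-θ : ℝ):ℂ) * Complex.I)) := by
    rw [Epow, hI2, ← hexp, Complex.ofReal_pow,
      show ((-1:ℝ)^(r+2) : ℂ) = (-1:ℂ)^(r+2) by push_cast; rfl]
    have hsign : ((-1:ℂ))^(r+2) * (-1:ℂ)^(r+1) = (-1:ℂ)^(2*r+3) := by
      rw [← pow_add]; congr 1; ring
    have hodd : ((-1:ℂ))^(2*r+3) = -1 := Odd.neg_one_pow ⟨r+1, by ring⟩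
    linear_combination ((((2*Real.sin (θ/2) : ℝ):ℂ))^(2*r+2)
      * Complex.exp (((-(((r+2:ℕ) : ℝ) * θ) : ℝ):ℂ) * Complex.I)
      * Complex.exp (((((2*r+2 : ℕ) : ℝ)*(θ/2) : ℝ):ℂ) * Complex.I)) * (hsign.trans hodd)
  rw [key]
  simp only [Complex.neg_im, Complex.mul_im, Complex.mul_re, Complex.ofReal_re,
    Complex.ofReal_im, Complex.exp_ofReal_mul_I_re, Complex.exp_ofReal_mul_I_im,
    Real.sin_neg, mul_pow]
  ring

lemma w_ne (θ : ℝ) : (-Complex.exp ((θ:ℂ) * Complex.I)) ≠ 0 := by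
  simpa using Complex.exp_ne_zero ((θ:ℂ) * Complex.I)

lemma term_im (c : ℝ) (k : ℤ) (θ : ℝ) :
    ((c : ℂ) * (-Complex.exp ((θ:ℂ) * Complex.I)) ^ k).im
      = c * ((-1:ℝ)^k * Real.sin ((k:ℝ) * θ)) := by
  rw [show (-Complex.exp ((θ:ℂ) * Complex.I)) = (-1) * Complex.exp ((θ:ℂ) * Complex.I) by ring,
    mul_zpow, ← Complex.exp_int_mul]
  have h1 : ((k:ℂ)) * ((θ:ℂ) * Complex.I) = ((((k:ℝ)) * θ : ℝ):ℂ) * Complex.I := by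
    push_cast; ring
  have h2 : ((-1:ℂ)) ^ k = (((-1:ℝ)^k : ℝ) : ℂ) := by
    rw [Complex.ofReal_zpow]; norm_num
  rw [h1, h2]
  simp only [Complex.mul_im, Complex.mul_re, Complex.ofReal_re, Complex.ofReal_im,
    Complex.exp_ofReal_mul_I_im, Complex.exp_ofReal_mul_I_re]
  ring

lemma wpow_neg_l (l : ℕ) (θ : ℝ) :
    (-Complex.exp ((θ:ℂ) * Complex.I)) ^ (-(l:ℤ))
      = (((-1:ℝ)^l : ℝ):ℂ) * Complex.exp (((-((l:ℝ)*θ) : ℝ):ℂ) * Complex.I) := by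
  rw [show (-Complex.exp ((θ:ℂ) * Complex.I)) = (-1) * Complex.exp ((θ:ℂ) * Complex.I) by ring,
    mul_zpow, ← Complex.exp_int_mul]
  congr 1
  · rw [zpow_neg, zpow_natCast]
    rcases Nat.even_or_odd l with he | ho
    · rw [he.neg_one_pow, inv_one, show ((-1:ℝ))^l = 1 from he.neg_one_pow]; norm_num
    · rw [ho.neg_one_pow, show ((-1:ℝ))^l = -1 from ho.neg_one_pow]; norm_num
  · congr 1; push_cast; ring

lemma sum_im (l r : ℕ) (θ : ℝ) :
    ∑ k ∈ Icc (-(l:ℤ)) (r:ℤ),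
        ((((l+r).choose ((l:ℤ)+k).toNat : ℕ):ℝ)) * ((-1:ℝ)^k * Real.sin ((k:ℝ)*θ))
      = (((-1:ℝ)^l : ℂ) * Complex.exp (((-((l:ℝ) * θ) : ℝ):ℂ) * Complex.I)
          * ((1:ℂ) - Complex.exp ((θ:ℂ) * Complex.I))^(l+r)).im := by
  have h := binom_zpow_sum l r (-Complex.exp ((θ:ℂ) * Complex.I)) (w_ne θ)
  have him := congrArg Complex.im h
  rw [Complex.im_sum] at him
  have hL : ∀ k ∈ Icc (-(l:ℤ)) (r:ℤ),
      ((((l+r).choose ((l:ℤ)+k).toNat : ℕ):ℂ) * (-Complex.exp ((θ:ℂ) * Complex.I)) ^ k).im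
        = ((((l+r).choose ((l:ℤ)+k).toNat : ℕ):ℝ)) * ((-1:ℝ)^k * Real.sin ((k:ℝ)*θ)) := by
    intro k _
    exact_mod_cast term_im (((l+r).choose ((l:ℤ)+k).toNat : ℕ):ℝ) k θ
  rw [Finset.sum_congr rfl hL] at him
  rw [show ((1:ℂ) - Complex.exp ((θ:ℂ)*Complex.I)) = 1 + -Complex.exp ((θ:ℂ)*Complex.I)
    from sub_eq_add_neg _ _, ← Complex.ofReal_pow, ← wpow_neg_l]
  exact him

lemma lam0_one (l r : ℕ) : lam0 l r 1 = 0 := by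
  unfold lam0
  have h : ∑ k ∈ Icc (-(l:ℤ)) (r:ℤ), (aCoef l r k : ℂ) * (1:ℂ) ^ k
      = ((∑ k ∈ Icc (-(l:ℤ)) (r:ℤ), aCoef l r k : ℝ) : ℂ) := by
    rw [Complex.ofReal_sum]
    exact Finset.sum_congr rfl fun k _ => by rw [one_zpow, mul_one]
  rw [h, sum_aCoef]
  simp

lemma re_lam0_eq (l r : ℕ) (θ : ℝ) :
    (lam0 l r (Complex.exp ((θ:ℂ) * Complex.I))).re
      = -∑ k ∈ Icc (-(l:ℤ)) (r:ℤ), aCoef l r k * Real.cos ((k:ℝ) * θ) := by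
  unfold lam0
  rw [Complex.neg_re, Complex.re_sum]
  congr 1
  apply Finset.sum_congr rfl
  intro k _
  rw [← Complex.exp_int_mul]
  rw [show ((k:ℂ)) * ((θ:ℂ) * Complex.I) = ((((k:ℝ))*θ : ℝ):ℂ) * Complex.I by push_cast; ring]
  simp only [Complex.mul_re, Complex.ofReal_re, Complex.ofReal_im,
    Complex.exp_ofReal_mul_I_re, Complex.exp_ofReal_mul_I_im]
  ring

lemma deriv_val (l r : ℕ) (θ : ℝ) :
    ∑ k ∈ Icc (-(l:ℤ)) (r:ℤ), aCoef l r k * ((k:ℝ) * Real.sin ((k:ℝ) * θ))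
      = -(((Nat.factorial l * Nat.factorial r : ℕ):ℝ) / ((Nat.factorial (l+r) : ℕ):ℝ))
        * (((-1:ℝ)^l : ℂ) * Complex.exp (((-((l:ℝ) * θ) : ℝ):ℂ) * Complex.I)
            * ((1:ℂ) - Complex.exp ((θ:ℂ) * Complex.I))^(l+r)).im := by
  rw [← sum_im, Finset.mul_sum]
  apply Finset.sum_congr rfl
  intro k hk
  simp only [Finset.mem_Icc] at hk
  by_cases hk0 : k = 0
  · subst hk0
    simp
  · rw [aCoef, if_neg hk0, mul_div_assoc, fact_ratio l r k hk.1 hk.2]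
    have hk0' : ((k:ℝ)) ≠ 0 := by exact_mod_cast hk0
    have hf : ((Nat.factorial (l+r) : ℕ) : ℝ) ≠ 0 :=
      Nat.cast_ne_zero.mpr (Nat.factorial_ne_zero _)
    field_simp

lemma hasDeriv_re_lam0 (l r : ℕ) (θ : ℝ) :
    HasDerivAt (fun t : ℝ => (lam0 l r (Complex.exp ((t:ℂ) * Complex.I))).re)
      (∑ k ∈ Icc (-(l:ℤ)) (r:ℤ), aCoef l r k * ((k:ℝ) * Real.sin ((k:ℝ) * θ))) θ := by
  have hfun : (fun t : ℝ => (lam0 l r (Complex.exp ((t:ℂ) * Complex.I))).re)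
      = (fun t : ℝ => -∑ k ∈ Icc (-(l:ℤ)) (r:ℤ), aCoef l r k * Real.cos ((k:ℝ) * t)) :=
    funext fun t => re_lam0_eq l r t
  rw [hfun]
  have hterm : ∀ k ∈ Icc (-(l:ℤ)) (r:ℤ),
      HasDerivAt (fun t : ℝ => aCoef l r k * Real.cos ((k:ℝ)*t))
        (aCoef l r k * (-Real.sin ((k:ℝ)*θ) * ((k:ℝ)*1))) θ := by
    intro k _
    exact (((hasDerivAt_id θ).const_mul ((k:ℝ))).cos).const_mul (aCoef l r k)
  have hsum := (HasDerivAt.sum hterm).neg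
  have hval : -∑ k ∈ Icc (-(l:ℤ)) (r:ℤ), (aCoef l r k * (-Real.sin ((k:ℝ)*θ) * ((k:ℝ)*1)))
      = ∑ k ∈ Icc (-(l:ℤ)) (r:ℤ), aCoef l r k * ((k:ℝ)*Real.sin ((k:ℝ)*θ)) := by
    rw [← Finset.sum_neg_distrib]
    exact Finset.sum_congr rfl fun k _ => by ring
  rw [← hval]
  refine hsum.congr_of_eventuallyEq (Filter.Eventually.of_forall fun t => ?_)
  simp only [Pi.neg_apply, Finset.sum_apply]

lemma case1 (r : ℕ) (θ : ℝ) :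
    (lam0 (r+1) r (Complex.exp ((θ:ℂ) * Complex.I))).re =
      -(2 ^ (2 * (r + 1)) * (Nat.factorial (r + 1) : ℝ) * (Nat.factorial r : ℝ) /
          (Nat.factorial (2 * r + 2) : ℝ)) * (Real.sin (θ / 2)) ^ (2 * (r + 1)) := by
  set C : ℝ := 2 ^ (2 * (r + 1)) * (Nat.factorial (r + 1) : ℝ) * (Nat.factorial r : ℝ) /
      (Nat.factorial (2 * r + 2) : ℝ) with hC
  have hderiv : ∀ t : ℝ, HasDerivAt
      (fun t : ℝ => (lam0 (r+1) r (Complex.exp ((t:ℂ) * Complex.I))).re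
         + C * Real.sin (t/2) ^ (2*(r+1))) 0 t := by
    intro t
    have h1 := hasDeriv_re_lam0 (r+1) r t
    have hhalf : HasDerivAt (fun x : ℝ => x/2) (1/2) t := (hasDerivAt_id t).div_const 2
    have h2 := (hhalf.sin.pow (2*(r+1))).const_mul C
    have h3 := h1.add h2
    have hval : (∑ k ∈ Icc (-(((r+1):ℕ):ℤ)) (r:ℤ), aCoef (r+1) r k * ((k:ℝ) * Real.sin ((k:ℝ)*t)))
        + C * (((2*(r+1) : ℕ) : ℝ) * Real.sin (t/2) ^ (2*(r+1) - 1) * (Real.cos (t/2) * (1/2)))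
        = 0 := by
      rw [deriv_val (r+1) r t, show (r+1)+r = 2*r+1 from by ring, Im_case1 r t]
      have h4 : ((Nat.factorial (2*r+2) : ℕ) : ℝ)
          = (2*(r:ℝ)+2) * ((Nat.factorial (2*r+1) : ℕ) : ℝ) := by
        rw [show 2*r+2 = (2*r+1)+1 from by ring, Nat.factorial_succ]; push_cast; ring
      have h5 : (2:ℝ)^(2*(r+1)) = 2 * 2^(2*r+1) := by
        rw [show 2*(r+1) = (2*r+1)+1 from by ring, pow_succ]; ring
      have hG : ((Nat.factorial (2*r+1) : ℕ) : ℝ) ≠ 0 :=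
        Nat.cast_ne_zero.mpr (Nat.factorial_ne_zero _)
      have hr2 : (2*(r:ℝ)+2) ≠ 0 := by positivity
      rw [hC, h4, h5, show 2*(r+1)-1 = 2*r+1 from by omega]
      push_cast
      field_simp
      ring
    exact hval ▸ h3
  have hconst := is_const_of_deriv_eq_zero
    (fun t => (hderiv t).differentiableAt) (fun t => (hderiv t).deriv) θ 0
  have hzero : (lam0 (r+1) r (Complex.exp (((0:ℝ):ℂ) * Complex.I))).re
      + C * Real.sin ((0:ℝ)/2) ^ (2*(r+1)) = 0 := by
    rw [show (((0:ℝ):ℂ) * Complex.I) = 0 by simp, Complex.exp_zero, lam0_one]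
    norm_num
  have := hconst.trans hzero
  linarith [this]

lemma case2 (r : ℕ) (θ : ℝ) :
    (lam0 (r+2) r (Complex.exp ((θ:ℂ) * Complex.I))).re =
      -(2 ^ (2 * (r + 2)) * ((2 * r + 3 : ℕ) : ℝ) * (Nat.factorial (r + 2) : ℝ) *
          (Nat.factorial r : ℝ) / (Nat.factorial (2 * r + 4) : ℝ)) *
        (Real.sin (θ / 2)) ^ (2 * (r + 2)) := by
  set C : ℝ := 2 ^ (2 * (r + 2)) * ((2 * r + 3 : ℕ) : ℝ) * (Nat.factorial (r + 2) : ℝ) *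
      (Nat.factorial r : ℝ) / (Nat.factorial (2 * r + 4) : ℝ) with hC
  have hderiv : ∀ t : ℝ, HasDerivAt
      (fun t : ℝ => (lam0 (r+2) r (Complex.exp ((t:ℂ) * Complex.I))).re
         + C * Real.sin (t/2) ^ (2*(r+2))) 0 t := by
    intro t
    have h1 := hasDeriv_re_lam0 (r+2) r t
    have hhalf : HasDerivAt (fun x : ℝ => x/2) (1/2) t := (hasDerivAt_id t).div_const 2
    have h2 := (hhalf.sin.pow (2*(r+2))).const_mul C
    have h3 := h1.add h2
    have hval : (∑ k ∈ Icc (-(((r+2):ℕ):ℤ)) (r:ℤ), aCoef (r+2) r k * ((k:ℝ) * Real.sin ((k:ℝ)*t)))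
        + C * (((2*(r+2) : ℕ) : ℝ) * Real.sin (t/2) ^ (2*(r+2) - 1) * (Real.cos (t/2) * (1/2)))
        = 0 := by
      rw [deriv_val (r+2) r t, show (r+2)+r = 2*r+2 from by ring, Im_case2 r t]
      have hsin2 : Real.sin t = 2 * Real.sin (t/2) * Real.cos (t/2) := by
        have h := Real.sin_two_mul (t/2)
        rw [show 2*(t/2) = t from by ring] at h
        exact h
      have h4 : ((Nat.factorial (2*r+4) : ℕ) : ℝ)
          = (2*(r:ℝ)+4) * (2*(r:ℝ)+3) * ((Nat.factorial (2*r+2) : ℕ) : ℝ) := by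
        rw [show 2*r+4 = ((2*r+2)+1)+1 from by ring, Nat.factorial_succ, Nat.factorial_succ]
        push_cast; ring
      have h5 : (2:ℝ)^(2*(r+2)) = 2 * 2 * 2^(2*r+2) := by
        rw [show 2*(r+2) = ((2*r+2)+1)+1 from by ring, pow_succ, pow_succ]; ring
      have hG : ((Nat.factorial (2*r+2) : ℕ) : ℝ) ≠ 0 :=
        Nat.cast_ne_zero.mpr (Nat.factorial_ne_zero _)
      have hr2 : (2*(r:ℝ)+4) ≠ 0 := by positivity
      have hr3 : (2*(r:ℝ)+3) ≠ 0 := by positivity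
      rw [hC, h4, h5, show 2*(r+2)-1 = 2*r+3 from by omega, hsin2,
        show (2*r+3 : ℕ) = (2*r+2)+1 from by ring, pow_succ]
      push_cast
      field_simp
      ring
    exact hval ▸ h3
  have hconst := is_const_of_deriv_eq_zero
    (fun t => (hderiv t).differentiableAt) (fun t => (hderiv t).deriv) θ 0
  have hzero : (lam0 (r+2) r (Complex.exp (((0:ℝ):ℂ) * Complex.I))).re
      + C * Real.sin ((0:ℝ)/2) ^ (2*(r+2)) = 0 := by
    rw [show (((0:ℝ):ℂ) * Complex.I) = 0 by simp, Complex.exp_zero, lam0_one]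
    norm_num
  have := hconst.trans hzero
  linarith [this]

theorem re_lam0_formula_and_neg (l r : ℕ) (hlr : 0 < l + r) :
    ((l = r + 1) → ∀ θ : ℝ,
      (lam0 l r (Complex.exp (θ * Complex.I))).re =
        -(2 ^ (2 * (r + 1)) * (Nat.factorial (r + 1) : ℝ) * (Nat.factorial r : ℝ) /
            (Nat.factorial (2 * r + 2) : ℝ)) * (Real.sin (θ / 2)) ^ (2 * (r + 1))) ∧
    ((l = r + 2) → ∀ θ : ℝ,
      (lam0 l r (Complex.exp (θ * Complex.I))).re =
        -(2 ^ (2 * (r + 2)) * ((2 * r + 3 : ℕ) : ℝ) * (Nat.factorial (r + 2) : ℝ) *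
            (Nat.factorial r : ℝ) / (Nat.factorial (2 * r + 4) : ℝ)) *
          (Real.sin (θ / 2)) ^ (2 * (r + 2))) ∧
    ((r + 1 ≤ l ∧ l ≤ r + 2) →
      (∀ θ : ℝ, 0 < θ → θ < 2 * Real.pi →
        (lam0 l r (Complex.exp (θ * Complex.I))).re < 0) ∧
      lam0 l r 1 = 0) := by
  refine ⟨?_, ?_, ?_⟩
  · rintro rfl θ
    exact case1 r θ
  · rintro rfl θ
    exact case2 r θ
  · rintro ⟨hl1, hl2⟩
    refine ⟨?_, lam0_one l r⟩
    intro θ hθ1 hθ2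
    have hs : 0 < Real.sin (θ/2) :=
      Real.sin_pos_of_pos_of_lt_pi (by linarith) (by linarith)
    have hfp : ∀ m : ℕ, (0:ℝ) < (Nat.factorial m : ℝ) := fun m => by
      exact_mod_cast m.factorial_pos
    rcases (by omega : l = r + 1 ∨ l = r + 2) with rfl | rfl
    · rw [case1 r θ]
      have hC : 0 < (2:ℝ) ^ (2 * (r + 1)) * (Nat.factorial (r + 1) : ℝ) * (Nat.factorial r : ℝ) /
          (Nat.factorial (2 * r + 2) : ℝ) := by
        have := hfp (r+1); have := hfp r; have := hfp (2*r+2)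
        positivity
      rw [neg_mul]
      exact neg_lt_zero.mpr (mul_pos hC (pow_pos hs _))
    · rw [case2 r θ]
      have hC : 0 < (2:ℝ) ^ (2 * (r + 2)) * ((2 * r + 3 : ℕ) : ℝ) * (Nat.factorial (r + 2) : ℝ) *
          (Nat.factorial r : ℝ) / (Nat.factorial (2 * r + 4) : ℝ) := by
        have := hfp (r+2); have := hfp r; have := hfp (2*r+4)
        have : (0:ℝ) < ((2*r+3 : ℕ) : ℝ) := by positivity
        positivity
      rw [neg_mul]
      exact neg_lt_zero.mpr (mul_pos hC (pow_pos hs _))
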